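/- arXiv:2505.18580 — 2 statements merged into one kernel-verified Lean document; each statement's English description precedes it below -/
import Mathlib

section
/- For all unit vectors x, y in ℂ^n (i.e., ‖x‖ = ‖y‖ = 1), one has Tr[(x x* − y y*) · conj(x x* − y y*)] = |∑_i x_i²|² + |∑_i y_i²|² − 2|∑_i x_i y_i|², and this quantity is at most 2. -/
open Matrix

theorem quantum_transport_cost_formula (n : ℕ) (x y : EuclideanSpace ℂ (Fin n))
    (hx : ‖x‖ = 1) (hy : ‖y‖ = 1) :
    Matrix.trace ((vecMulVec x (star x) - vecMulVec y (star y)) *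
        (vecMulVec x (star x) - vecMulVec y (star y)).map (starRingEnd ℂ)) =
      ((‖∑ i, (x i)^2‖^2 + ‖∑ i, (y i)^2‖^2
        - 2 * ‖∑ i, x i * y i‖^2 : ℝ) : ℂ) ∧
    ‖∑ i, (x i)^2‖^2 + ‖∑ i, (y i)^2‖^2
        - 2 * ‖∑ i, x i * y i‖^2 ≤ 2 := by
  classical
  set Sx := ∑ i, (x i)^2 with hSx
  set Sy := ∑ i, (y i)^2 with hSy
  set Sxy := ∑ i, x i * y i with hSxy
  have conj_sum_x : (starRingEnd ℂ) Sx = ∑ j, ((starRingEnd ℂ) (x j))^2 := by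
    rw [hSx, map_sum]; simp [map_pow]
  have conj_sum_y : (starRingEnd ℂ) Sy = ∑ j, ((starRingEnd ℂ) (y j))^2 := by
    rw [hSy, map_sum]; simp [map_pow]
  have conj_sum_xy : (starRingEnd ℂ) Sxy = ∑ j, (starRingEnd ℂ) (x j) * (starRingEnd ℂ) (y j) := by
    rw [hSxy, map_sum]; simp
  constructor
  · have hL : Matrix.trace ((vecMulVec x (star x) - vecMulVec y (star y)) *
        (vecMulVec x (star x) - vecMulVec y (star y)).map (starRingEnd ℂ)) =
        Sx * (starRingEnd ℂ) Sx + Sy * (starRingEnd ℂ) Sy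
          - 2 * (Sxy * (starRingEnd ℂ) Sxy) := by
      rw [conj_sum_x, conj_sum_y, conj_sum_xy, hSx, hSy, hSxy]
      rw [Finset.sum_mul_sum, Finset.sum_mul_sum, Finset.sum_mul_sum]
      simp only [Matrix.trace, Matrix.diag, Matrix.mul_apply, Matrix.sub_apply,
        Matrix.map_apply, vecMulVec_apply, Pi.star_apply, Finset.mul_sum,
        ← Finset.sum_add_distrib, ← Finset.sum_sub_distrib]
      refine Finset.sum_congr rfl fun i _ => Finset.sum_congr rfl fun j _ => ?_
      simp only [RingHom.coe_coe, starRingEnd_apply, star_sub, star_mul', star_star]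
      ring
    rw [hL]
    have mc : ∀ z : ℂ, z * (starRingEnd ℂ) z = ((‖z‖)^2 : ℝ) := by
      intro z
      rw [Complex.mul_conj, Complex.sq_norm]
    rw [mc, mc, mc]
    push_cast
    ring
  · have hx2 : ∑ i, ‖x i‖^2 = 1 := by
      have h := hx
      rw [EuclideanSpace.norm_eq] at h
      have h2 : ∑ i, ‖x i‖^2 = 1 := Real.sqrt_eq_one.mp h
      exact h2
    have hy2 : ∑ i, ‖y i‖^2 = 1 := by
      have h := hy
      rw [EuclideanSpace.norm_eq] at h
      have h2 : ∑ i, ‖y i‖^2 = 1 := Real.sqrt_eq_one.mp h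
      exact h2
    have hax : ‖Sx‖ ≤ 1 := by
      calc ‖Sx‖ ≤ ∑ i, ‖(x i)^2‖ := by
            exact norm_sum_le _ _
        _ = ∑ i, ‖x i‖^2 := by simp [norm_pow]
        _ = 1 := hx2
    have hay : ‖Sy‖ ≤ 1 := by
      calc ‖Sy‖ ≤ ∑ i, ‖(y i)^2‖ := by
            exact norm_sum_le _ _
        _ = ∑ i, ‖y i‖^2 := by simp [norm_pow]
        _ = 1 := hy2
    have h0x : (0:ℝ) ≤ ‖Sx‖ := norm_nonneg _
    have h0y : (0:ℝ) ≤ ‖Sy‖ := norm_nonneg _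
    have h0xy : (0:ℝ) ≤ ‖Sxy‖ := norm_nonneg _
    nlinarith [sq_nonneg ‖Sxy‖]
end

section
/- Let K be an invertible linear operator on the space of polynomials of degree at most d on a compact set X, satisfying: (P1) K(1) = 1, (P2) Kp ∈ T for every polynomial p of degree ≤ d nonnegative on X, where T is a convex cone of polynomials nonnegative on X containing the nonnegative constants and closed under addition, and (P3) ‖K⁻¹q − q‖_X ≤ ε for a given polynomial q of degree ≤ d with min over X equal to 0. Then q + ε ∈ T. -/
open MvPolynomial

theorem kernel_operator_positivity_certificate (n d : ℕ) (X : Set (Fin n → ℝ))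
    (hXc : IsCompact X)
    (T : Set (MvPolynomial (Fin n) ℝ))
    -- T is a convex cone of polynomials nonnegative on X containing the
    -- nonnegative constants and closed under addition
    (hTpos : ∀ f ∈ T, ∀ x ∈ X, 0 ≤ eval x f)
    (hTconst : ∀ c : ℝ, 0 ≤ c → C c ∈ T)
    (hTadd : ∀ f g, f ∈ T → g ∈ T → f + g ∈ T)
    -- K, an invertible linear operator on polynomials of degree at most d,
    -- with inverse Kinv
    (K Kinv : MvPolynomial (Fin n) ℝ →ₗ[ℝ] MvPolynomial (Fin n) ℝ)
    (hKinv : ∀ p, K (Kinv p) = p) (hKinv' : ∀ p, Kinv (K p) = p)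
    (hKdeg : ∀ p : MvPolynomial (Fin n) ℝ, p.totalDegree ≤ d → (K p).totalDegree ≤ d)
    (hKinvdeg : ∀ p : MvPolynomial (Fin n) ℝ, p.totalDegree ≤ d → (Kinv p).totalDegree ≤ d)
    -- (P1)
    (hP1 : K 1 = 1)
    -- (P2)
    (hP2 : ∀ p : MvPolynomial (Fin n) ℝ, p.totalDegree ≤ d →
      (∀ x ∈ X, 0 ≤ eval x p) → K p ∈ T)
    -- q of degree ≤ d with minimum 0 on X
    (q : MvPolynomial (Fin n) ℝ) (hqdeg : q.totalDegree ≤ d)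
    (hqmin : (∀ x ∈ X, 0 ≤ eval x q) ∧ ∃ x ∈ X, eval x q = 0)
    -- (P3)
    (ε : ℝ) (hP3 : ∀ x ∈ X, |eval x (Kinv q - q)| ≤ ε) :
    q + C ε ∈ T := by
  have hKC : K (C ε) = C ε := by
    have : (C ε : MvPolynomial (Fin n) ℝ) = ε • 1 := by
      simp [Algebra.smul_def]
    rw [this, map_smul, hP1]
  have key : q + C ε = K (Kinv q + C ε) := by
    rw [map_add, hKinv, hKC]
  rw [key]
  apply hP2
  · refine le_trans (totalDegree_add _ _) ?_
    simp only [max_le_iff]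
    exact ⟨hKinvdeg q hqdeg, le_trans (totalDegree_C ε).le (Nat.zero_le d)⟩
  · intro x hx
    have h1 := hqmin.1 x hx
    have h2 := hP3 x hx
    have := abs_le.mp h2
    simp only [map_sub] at this
    simp only [map_add, eval_C]
    linarith [this.1]
end
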